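/- Fix a school choice problem, a tier structure t, and a TDA Nash equilibrium Q. Then for each student i, running DA on the reshuffled profile Q̃ gives i the same assignment as running DA with i reporting truthfully against the others' reshuffled reports: DA(Q̃_i, Q̃_{-i})(i) = DA(R_i, Q̃_{-i})(i). -/

import Mathlib

set_option linter.unusedSectionVars false

namespace SchoolChoice

/-- A strict preference over `S ∪ {self}`, encoded by an injective ranking function on
`Option S`; `none` denotes being unmatched (the student himself), and a smaller rank
means more preferred. Injective rankings on a finite set are exactly strict linear orders. -/
structure Pref (S : Type) where
  rank : Option S → ℕ
  inj : Function.Injective rank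

/-- Quotas together with strict priorities of the schools: `prank s` ranks the students
at school `s`, a smaller rank meaning higher priority. -/
structure Prio (I S : Type) where
  quota : S → ℕ
  prank : S → I → ℕ
  inj : ∀ s, Function.Injective (prank s)

variable {I S : Type} [Fintype I] [Fintype S] [DecidableEq I] [DecidableEq S]

/-- `i` has strictly higher priority than `j` at school `s`. -/
def Prio.higher (E : Prio I S) (s : S) (i j : I) : Prop :=
  E.prank s i < E.prank s j

/-- A matching assigns to each student a school or himself (`none`). -/
abbrev Matching (I S : Type) := I → Option S

/-- The set of students assigned to school `s`. -/
def assigned (μ : Matching I S) (s : S) : Finset I :=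
  Finset.univ.filter (fun i => μ i = some s)

/-- Quotas are respected. -/
def Feasible (E : Prio I S) (μ : Matching I S) : Prop :=
  ∀ s, (assigned μ s).card ≤ E.quota s

/-- `(i, s)` is a blocking pair of `μ` with respect to preferences `R`:
`i` strictly prefers `s` to his assignment, and either `s` has an empty seat
(wastefulness) or some student assigned to `s` has lower priority than `i`
(justified envy). -/
def Blocks (E : Prio I S) (R : I → Pref S) (μ : Matching I S) (i : I) (s : S) : Prop :=
  (R i).rank (some s) < (R i).rank (μ i) ∧
    ((assigned μ s).card < E.quota s ∨ ∃ j, μ j = some s ∧ E.higher s i j)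

/-- Individual rationality: every student weakly prefers his assignment to being unmatched. -/
def IndivRat (R : I → Pref S) (μ : Matching I S) : Prop :=
  ∀ i, (R i).rank (μ i) ≤ (R i).rank none

/-- Non-wastefulness: no student prefers a school with an empty seat to his assignment. -/
def NonWasteful (E : Prio I S) (R : I → Pref S) (μ : Matching I S) : Prop :=
  ∀ i s, (R i).rank (some s) < (R i).rank (μ i) → E.quota s ≤ (assigned μ s).card

/-- Stability: feasible, individually rational, and no blocking pair
(no justified envy and non-wasteful). -/
def Stable (E : Prio I S) (R : I → Pref S) (μ : Matching I S) : Prop :=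
  Feasible E μ ∧ IndivRat R μ ∧ ∀ i s, ¬ Blocks E R μ i s

/-- The student-optimal stable matching for the (reported) preferences. -/
def StudentOptimal (E : Prio I S) (R : I → Pref S) (μ : Matching I S) : Prop :=
  Stable E R μ ∧ ∀ ν, Stable E R ν → ∀ i, (R i).rank (μ i) ≤ (R i).rank (ν i)

open Classical in
/-- The student-proposing deferred acceptance mechanism: by the Gale–Shapley theorem its
outcome is the (unique) student-optimal stable matching of the reported preferences. -/
noncomputable def DA (E : Prio I S) (R : I → Pref S) : Matching I S :=
  if h : ∃ μ, StudentOptimal E R μ then h.choose else fun _ => none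

/-- A strict upper bound for the values of a ranking. -/
noncomputable def bnd (p : Pref S) : ℕ := (Finset.univ.sup p.rank) + 1

lemma rank_lt_bnd (p : Pref S) (x : Option S) : p.rank x < bnd p :=
  Nat.lt_succ_of_le (Finset.le_sup (Finset.mem_univ x))

private lemma mul_add_lt {a K B r : ℕ} (ha : a ≤ K) (hr : r < B) :
    a * B + r < (K + 1) * B := by
  calc a * B + r < a * B + B := by omega
    _ = (a + 1) * B := by ring
    _ ≤ (K + 1) * B := Nat.mul_le_mul (by omega) le_rfl

/-- Is an alternative "inside the market" `A`?  `none` always is. -/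
def goodB (A : S → Prop) [DecidablePred A] : Option S → Bool
  | none => true
  | some s => decide (A s)

/-- The preference truncated to the set of schools `A`: schools in `A` (and the outside
option `none`) keep their relative order, while all schools outside `A` are pushed below
`none` (become unacceptable), keeping their relative order among themselves. -/
noncomputable def trunc (A : S → Prop) [DecidablePred A] (p : Pref S) : Pref S where
  rank x := (if goodB A x then 0 else bnd p) + p.rank x
  inj := by
    intro x y h
    by_cases hx : goodB A x <;> by_cases hy : goodB A y <;>
      simp only [hx, hy, if_true, if_false, Bool.false_eq_true, zero_add] at h
    · exact p.inj h
    · have := rank_lt_bnd p x; omega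
    · have := rank_lt_bnd p y; omega
    · exact p.inj (by omega)

/-- The reshuffled preference with respect to a tier structure `t`: acceptable schools
are grouped by tier in increasing tier order (keeping the original relative order within
each tier) above `none`, and all unacceptable schools are placed below `none`. -/
noncomputable def reshuffle (t : S → ℕ) (p : Pref S) : Pref S where
  rank x :=
    Option.elim x ((Finset.univ.sup t + 1) * bnd p)
      (fun s =>
        if p.rank (some s) < p.rank none then t s * bnd p + p.rank (some s)
        else (Finset.univ.sup t + 1) * bnd p + 1 + p.rank (some s))
  inj := by
    have hB : ∀ x, p.rank x < bnd p := rank_lt_bnd p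
    have hK : ∀ s : S, t s ≤ Finset.univ.sup t := fun s => Finset.le_sup (Finset.mem_univ s)
    intro x y h
    rcases x with _ | s <;> rcases y with _ | s' <;>
      simp only [Option.elim_none, Option.elim_some] at h
    · rfl
    · by_cases hy : p.rank (some s') < p.rank none <;> simp only [hy, if_true, if_false] at h
      · have := mul_add_lt (hK s') (hB (some s')); omega
      · omega
    · by_cases hx : p.rank (some s) < p.rank none <;> simp only [hx, if_true, if_false] at h
      · have := mul_add_lt (hK s) (hB (some s)); omega
      · omega
    · by_cases hx : p.rank (some s) < p.rank none <;>
        by_cases hy : p.rank (some s') < p.rank none <;>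
        simp only [hx, hy, if_true, if_false] at h
      · have hts : t s = t s' := by
          rcases Nat.lt_trichotomy (t s) (t s') with h1 | h1 | h1
          · have h2 : t s * bnd p + p.rank (some s) < t s' * bnd p + p.rank (some s') := by
              have h3 := mul_add_lt (a := t s) (K := t s' - 1) (B := bnd p) (by omega) (hB (some s))
              have h4 : (t s' - 1 + 1) * bnd p = t s' * bnd p := by congr 1; omega
              omega
            omega
          · exact h1
          · have h2 : t s' * bnd p + p.rank (some s') < t s * bnd p + p.rank (some s) := by
              have h3 := mul_add_lt (a := t s') (K := t s - 1) (B := bnd p) (by omega) (hB (some s'))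
              have h4 : (t s - 1 + 1) * bnd p = t s * bnd p := by congr 1; omega
              omega
            omega
        rw [hts] at h
        exact p.inj (by omega)
      · have := mul_add_lt (hK s) (hB (some s)); omega
      · have := mul_add_lt (hK s') (hB (some s')); omega
      · exact p.inj (by omega)

/-- A tier structure assigning each school a tier in `{1, …, T}`, each tier nonempty. -/
def IsTierStructure (t : S → ℕ) (T : ℕ) : Prop :=
  (∀ s, 1 ≤ t s ∧ t s ≤ T) ∧ ∀ k, 1 ≤ k → k ≤ T → ∃ s, t s = k

/-- Rounds `1, …, k` of the tiered deferred acceptance mechanism: in round `k` the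
students left unmatched so far participate in the DA mechanism with their preferences
truncated to the tier-`k` schools (already matched students participate with nothing
acceptable); students matched in earlier rounds keep their assignments. -/
noncomputable def TDAaux (E : Prio I S) (t : S → ℕ) (Q : I → Pref S) : ℕ → Matching I S
  | 0 => fun _ => none
  | k + 1 => fun i =>
      match TDAaux E t Q k i with
      | some s => some s
      | none =>
          DA E (fun j =>
            if TDAaux E t Q k j = none then trunc (fun s => t s = k + 1) (Q j)
            else trunc (fun _ => False) (Q j)) i

/-- The tiered deferred acceptance mechanism under tier structure `t`. -/
noncomputable def TDA (E : Prio I S) (t : S → ℕ) (Q : I → Pref S) : Matching I S :=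
  TDAaux E t Q (Finset.univ.sup t)

/-- `Q` is a (pure) Nash equilibrium of the preference revelation game induced by the
mechanism `f` when the true preferences are `R`: no student can obtain a school he truly
strictly prefers by unilaterally changing his report. -/
def NashEq (R : I → Pref S) (f : (I → Pref S) → Matching I S) (Q : I → Pref S) : Prop :=
  ∀ (i : I) (Qi' : Pref S),
    (R i).rank (f Q i) ≤ (R i).rank (f (Function.update Q i Qi') i)

/-- `μ` is a Nash equilibrium outcome of the revelation game induced by `f` at true
preferences `R`. -/
def NashOutcome (R : I → Pref S) (f : (I → Pref S) → Matching I S) (μ : Matching I S) : Prop :=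
  ∃ Q, NashEq R f Q ∧ f Q = μ

/-- The preference `p` is aligned with the tier structure `t`: a (weakly) more preferred
school always lies in a weakly earlier tier. -/
def AlignedPref (t : S → ℕ) (p : Pref S) : Prop :=
  ∀ s s' : S, p.rank (some s) ≤ p.rank (some s') → t s ≤ t s'

/-- `p` lists exactly the school in `o` (if any) as acceptable. -/
def OnlyAcceptable (p : Pref S) (o : Option S) : Prop :=
  ∀ s : S, (p.rank (some s) < p.rank none ↔ o = some s)

/-- An Ergin cycle of the priority structure among the schools in `A`. -/
def Cycle (E : Prio I S) (A : S → Prop) : Prop :=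
  ∃ a b : S, A a ∧ A b ∧ a ≠ b ∧ ∃ i j k : I,
    E.higher a i j ∧ E.higher a j k ∧ E.higher b k i ∧
    ∃ Ia Ib : Finset I, Disjoint Ia Ib ∧
      (∀ l ∈ Ia, l ≠ i ∧ l ≠ j ∧ l ≠ k ∧ E.higher a l j) ∧
      (∀ l ∈ Ib, l ≠ i ∧ l ≠ j ∧ l ≠ k ∧ E.higher b l i) ∧
      Ia.card = E.quota a - 1 ∧ Ib.card = E.quota b - 1

/-- Within-tier acyclicity of a generalized priority structure: no Ergin cycle among the
schools of any single tier. -/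
def WithinTierAcyclic (E : Prio I S) (t : S → ℕ) : Prop :=
  ∀ k : ℕ, ¬ Cycle E (fun s => t s = k)

/-- The (strict) preference `pr` of school `s` over sets of students is a responsive
extension of its priorities. -/
def Responsive (E : Prio I S) (s : S) (pr : Finset I → Finset I → Prop) : Prop :=
  ∀ (J : Finset I) (i j : I), i ∉ J → j ∉ J → E.higher s i j →
    pr (insert i J) (insert j J)

/-- `t` is a refinement of `t'`: `t'` ranks `a` in a strictly later tier than `b` only
if `t` does. -/
def Refines (t t' : S → ℕ) : Prop :=
  ∀ a b : S, t' b < t' a → t b < t a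


/-! ### Auxiliary development: the Gale–Shapley algorithm -/

section GS

attribute [local instance] Classical.propDecidable

variable (E : Prio I S) (P : I → Pref S)

/-- Options still available to student `i` given the rejection sets `σ`. -/
noncomputable def allowedOpts (σ : I → Finset S) (i : I) : Finset (Option S) :=
  insert none ((Finset.univ.filter (fun s => s ∉ σ i)).image some)

lemma none_mem_allowed (σ : I → Finset S) (i : I) : none ∈ allowedOpts σ i :=
  Finset.mem_insert_self _ _

lemma some_mem_allowed {σ : I → Finset S} {i : I} {s : S} :
    some s ∈ allowedOpts σ i ↔ s ∉ σ i := by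
  simp [allowedOpts]

/-- The proposal of student `i`: his best still-available option. -/
noncomputable def propose (σ : I → Finset S) (i : I) : Option S :=
  ((allowedOpts σ i).exists_min_image (P i).rank ⟨none, none_mem_allowed σ i⟩).choose

lemma propose_mem (σ : I → Finset S) (i : I) : propose P σ i ∈ allowedOpts σ i :=
  ((allowedOpts σ i).exists_min_image (P i).rank
    ⟨none, none_mem_allowed σ i⟩).choose_spec.1

lemma propose_min {σ : I → Finset S} {i : I} {x : Option S} (hx : x ∈ allowedOpts σ i) :
    (P i).rank (propose P σ i) ≤ (P i).rank x :=
  ((allowedOpts σ i).exists_min_image (P i).rank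
    ⟨none, none_mem_allowed σ i⟩).choose_spec.2 x hx

lemma propose_not_rejected {σ : I → Finset S} {i : I} {s : S}
    (h : propose P σ i = some s) : s ∉ σ i := by
  have := propose_mem P σ i; rw [h] at this; exact some_mem_allowed.1 this

/-- Students currently proposing to school `s`. -/
noncomputable def proposers (σ : I → Finset S) (s : S) : Finset I :=
  Finset.univ.filter (fun i => propose P σ i = some s)

lemma mem_proposers {σ : I → Finset S} {s : S} {i : I} :
    i ∈ proposers P σ s ↔ propose P σ i = some s := by simp [proposers]

/-- The proposers tentatively kept by school `s` (its quota-best proposers). -/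
noncomputable def kept (σ : I → Finset S) (s : S) : Finset I :=
  (proposers P σ s).filter
    (fun i => ((proposers P σ s).filter (fun j => E.prank s j < E.prank s i)).card < E.quota s)

lemma kept_subset (σ : I → Finset S) (s : S) : kept E P σ s ⊆ proposers P σ s :=
  Finset.filter_subset _ _

/-- One round of deferred acceptance: rejected students accumulate rejections. -/
noncomputable def gsStep (σ : I → Finset S) : I → Finset S := fun i =>
  σ i ∪ Finset.univ.filter (fun s => propose P σ i = some s ∧ i ∉ kept E P σ s)

lemma mem_gsStep {σ : I → Finset S} {i : I} {s : S} :
    s ∈ gsStep E P σ i ↔ s ∈ σ i ∨ (propose P σ i = some s ∧ i ∉ kept E P σ s) := by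
  simp [gsStep]

lemma subset_gsStep (σ : I → Finset S) (i : I) : σ i ⊆ gsStep E P σ i :=
  Finset.subset_union_left

/-- The state after `n` rounds. -/
noncomputable def gsState (n : ℕ) : I → Finset S :=
  (gsStep E P)^[n] (fun _ => ∅)

lemma gsState_zero : gsState E P 0 = fun _ => (∅ : Finset S) := rfl

lemma gsState_succ (n : ℕ) : gsState E P (n + 1) = gsStep E P (gsState E P n) :=
  Function.iterate_succ_apply' _ _ _

/-- Total number of recorded rejections. -/
noncomputable def msize (σ : I → Finset S) : ℕ := ∑ i, (σ i).card

lemma msize_le (σ : I → Finset S) : msize σ ≤ Fintype.card I * Fintype.card S := by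
  have : ∀ i : I, (σ i).card ≤ Fintype.card S := fun i => Finset.card_le_univ _
  calc msize σ ≤ ∑ _i : I, Fintype.card S := Finset.sum_le_sum (fun i _ => this i)
    _ = Fintype.card I * Fintype.card S := by
        rw [Finset.sum_const, Finset.card_univ, smul_eq_mul]

lemma msize_lt_of_ne {σ : I → Finset S} (h : gsStep E P σ ≠ σ) :
    msize σ < msize (gsStep E P σ) := by
  have hne : ∃ i, σ i ≠ gsStep E P σ i := by
    by_contra hc; push_neg at hc; exact h (funext fun i => (hc i).symm)
  obtain ⟨i, hi⟩ := hne
  have hss : σ i ⊂ gsStep E P σ i := ssubset_of_ne_of_subset hi (subset_gsStep E P σ i)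
  exact Finset.sum_lt_sum (fun j _ => Finset.card_le_card (subset_gsStep E P σ j))
    ⟨i, Finset.mem_univ i, Finset.card_lt_card hss⟩

/-- Number of rounds that certainly suffices to reach a fixed point. -/
noncomputable def gsN (I S : Type) [Fintype I] [Fintype S] : ℕ :=
  Fintype.card I * Fintype.card S + 1

lemma gsState_stabilize {l : ℕ} (hl : gsStep E P (gsState E P l) = gsState E P l) :
    ∀ m, l ≤ m → gsState E P m = gsState E P l := by
  intro m hm
  induction m with
  | zero => have : l = 0 := by omega
            rw [this]
  | succ n ih =>
      rcases Nat.lt_or_ge l (n+1) with h | h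
      · have hn : l ≤ n := by omega
        rw [gsState_succ, ih hn, hl]
      · have : l = n + 1 := by omega
        rw [this]

lemma gsFix : gsStep E P (gsState E P (gsN I S)) = gsState E P (gsN I S) := by
  by_cases hex : ∃ l ≤ gsN I S, gsStep E P (gsState E P l) = gsState E P l
  · obtain ⟨l, hl, hfix⟩ := hex
    rw [gsState_stabilize E P hfix _ hl, hfix]
  · push_neg at hex
    exfalso
    have key : ∀ m, m ≤ gsN I S + 1 → m ≤ msize (gsState E P m) := by
      intro m
      induction m with
      | zero => intro _; exact Nat.zero_le _
      | succ n ih =>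
          intro hn
          have h1 : n ≤ msize (gsState E P n) := ih (by omega)
          have h2 : gsStep E P (gsState E P n) ≠ gsState E P n := hex n (by omega)
          have h3 := msize_lt_of_ne E P h2
          rw [gsState_succ]; omega
    have h4 := key (gsN I S + 1) le_rfl
    have h5 := msize_le (gsState E P (gsN I S + 1))
    have h6 : gsN I S = Fintype.card I * Fintype.card S + 1 := rfl
    omega

lemma gsState_mono : ∀ {m n : ℕ}, m ≤ n → ∀ i, gsState E P m i ⊆ gsState E P n i := by
  intro m n hmn
  induction n with
  | zero => intro i; have : m = 0 := by omega
            rw [this]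
  | succ k ih =>
      intro i
      rcases Nat.lt_or_ge m (k+1) with h | h
      · refine (ih (by omega) i).trans ?_
        rw [gsState_succ]
        exact subset_gsStep E P _ i
      · have : m = k + 1 := by omega
        rw [this]

lemma gsState_ge_fix {n : ℕ} (hn : gsN I S ≤ n) :
    gsState E P n = gsState E P (gsN I S) :=
  gsState_stabilize E P (gsFix E P) n hn

lemma gsState_subset_fix (n : ℕ) (i : I) :
    gsState E P n i ⊆ gsState E P (gsN I S) i := by
  rcases Nat.le_total n (gsN I S) with h | h
  · exact gsState_mono E P h i
  · rw [gsState_ge_fix E P h]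

/-- The Gale–Shapley matching. -/
noncomputable def gsMatch : Matching I S := fun i =>
  propose P (gsState E P (gsN I S)) i

lemma propose_congr {σ σ' : I → Finset S} {i : I} (h : σ i = σ' i) :
    propose P σ i = propose P σ' i := by
  unfold propose allowedOpts
  congr 1 <;> rw [h]

lemma propose_rank_mono {m n : ℕ} (hmn : m ≤ n) (i : I) :
    (P i).rank (propose P (gsState E P m) i) ≤ (P i).rank (propose P (gsState E P n) i) := by
  apply propose_min
  have h1 := propose_mem P (gsState E P n) i
  rcases hx : propose P (gsState E P n) i with _ | s
  · exact none_mem_allowed _ _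
  · rw [hx] at h1
    have h2 : s ∉ gsState E P n i := some_mem_allowed.1 h1
    exact some_mem_allowed.2 (fun hc => h2 (gsState_mono E P hmn i hc))

/-- Counting lemma: the number of elements of `A` having fewer than `q` elements
of `A` strictly below them (w.r.t. an injective score `f`) is `min q A.card`. -/
lemma topcnt (A : Finset I) (f : I → ℕ) (hf : Function.Injective f) (q : ℕ) :
    (A.filter fun i => (A.filter fun j => f j < f i).card < q).card = min q A.card := by
  classical
  set φ : I → ℕ := fun i => (A.filter fun j => f j < f i).card with hφ
  have hmono : ∀ i ∈ A, ∀ i' ∈ A, f i < f i' → φ i < φ i' := by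
    intro i hi i' hi' hlt
    apply Finset.card_lt_card
    constructor
    · intro j hj
      rw [Finset.mem_filter] at hj ⊢
      exact ⟨hj.1, hj.2.trans hlt⟩
    · intro hsub
      have : i ∈ A.filter fun j => f j < f i' := Finset.mem_filter.2 ⟨hi, hlt⟩
      have h2 := hsub this
      rw [Finset.mem_filter] at h2
      omega
  have hinj : Set.InjOn φ A := by
    intro i hi i' hi' heq
    by_contra hne
    have hfne : f i ≠ f i' := fun h => hne (hf h)
    rcases Nat.lt_or_ge (f i) (f i') with h | h
    · have := hmono i hi i' hi' h; omega
    · have := hmono i' hi' i hi (by omega); omega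
  have himg_lt : ∀ i ∈ A, φ i < A.card := by
    intro i hi
    have hsub : (A.filter fun j => f j < f i) ⊆ A.erase i := by
      intro j hj
      rw [Finset.mem_filter] at hj
      refine Finset.mem_erase.2 ⟨?_, hj.1⟩
      intro h; rw [h] at hj; omega
    calc φ i ≤ (A.erase i).card := Finset.card_le_card hsub
      _ < A.card := by
          rw [Finset.card_erase_of_mem hi]
          have : 0 < A.card := Finset.card_pos.2 ⟨i, hi⟩
          omega
  have himg : A.image φ = Finset.range A.card := by
    apply Finset.eq_of_subset_of_card_le
    · intro b hb
      obtain ⟨i, hi, rfl⟩ := Finset.mem_image.1 hb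
      exact Finset.mem_range.2 (himg_lt i hi)
    · rw [Finset.card_range, Finset.card_image_of_injOn hinj]
  have hfilt_img : (A.filter fun i => φ i < q).image φ = (A.image φ).filter (· < q) := by
    ext b
    simp only [Finset.mem_image, Finset.mem_filter]
    constructor
    · rintro ⟨i, hi, rfl⟩
      exact ⟨⟨i, hi.1, rfl⟩, hi.2⟩
    · rintro ⟨⟨i, hi, rfl⟩, hb⟩
      exact ⟨i, ⟨hi, hb⟩, rfl⟩
  have hrange : (Finset.range A.card).filter (· < q) = Finset.range (min q A.card) := by
    ext b
    simp only [Finset.mem_filter, Finset.mem_range]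
    omega
  calc (A.filter fun i => φ i < q).card
      = ((A.filter fun i => φ i < q).image φ).card :=
        (Finset.card_image_of_injOn (hinj.mono (Finset.filter_subset _ _))).symm
    _ = ((A.image φ).filter (· < q)).card := by rw [hfilt_img]
    _ = min q A.card := by rw [himg, hrange, Finset.card_range]

lemma kept_card (E : Prio I S) (P : I → Pref S) (σ : I → Finset S) (s : S) :
    (kept E P σ s).card = min (E.quota s) (proposers P σ s).card :=
  topcnt _ _ (E.inj s) _

lemma kept_dominance (E : Prio I S) (P : I → Pref S) {σ : I → Finset S} {s : S}
    {K : Finset I} {r : ℕ} (hKsub : K ⊆ proposers P σ s) (hKcard : K.card = E.quota s)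
    (hKr : ∀ j ∈ K, E.prank s j < r) :
    ∀ i ∈ kept E P σ s, E.prank s i < r := by
  intro i hi
  rw [kept, Finset.mem_filter] at hi
  by_contra hge
  have hsub : K ⊆ (proposers P σ s).filter fun j => E.prank s j < E.prank s i := by
    intro j hj
    exact Finset.mem_filter.2 ⟨hKsub hj, by have := hKr j hj; omega⟩
  have := Finset.card_le_card hsub
  omega

lemma reject_kept_facts (E : Prio I S) (P : I → Pref S) {σ : I → Finset S} {s : S} {i : I}
    (hp : i ∈ proposers P σ s) (hk : i ∉ kept E P σ s) :
    (kept E P σ s).card = E.quota s ∧ ∀ j ∈ kept E P σ s, E.prank s j < E.prank s i := by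
  have hge : E.quota s ≤ ((proposers P σ s).filter fun j => E.prank s j < E.prank s i).card := by
    by_contra hc
    exact hk (Finset.mem_filter.2 ⟨hp, by omega⟩)
  have hsub : ((proposers P σ s).filter fun j => E.prank s j < E.prank s i)
      ⊆ (proposers P σ s).erase i := by
    intro j hj
    rw [Finset.mem_filter] at hj
    refine Finset.mem_erase.2 ⟨?_, hj.1⟩
    intro h; rw [h] at hj; omega
  have hcard : E.quota s + 1 ≤ (proposers P σ s).card := by
    have h1 := Finset.card_le_card hsub
    have h2 : ((proposers P σ s).erase i).card = (proposers P σ s).card - 1 :=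
      Finset.card_erase_of_mem hp
    have h3 : 0 < (proposers P σ s).card := Finset.card_pos.2 ⟨i, hp⟩
    omega
  constructor
  · rw [kept_card]; omega
  · intro j hj
    by_contra hge2
    have hjp : j ∈ proposers P σ s := kept_subset E P σ s hj
    have hji : j ≠ i := fun h => hk (h ▸ hj)
    have hlt : E.prank s i < E.prank s j := by
      have : E.prank s i ≠ E.prank s j := fun h => hji (E.inj s h.symm)
      omega
    rw [kept, Finset.mem_filter] at hj
    have hsub2 : insert i ((proposers P σ s).filter fun l => E.prank s l < E.prank s i)
        ⊆ (proposers P σ s).filter fun l => E.prank s l < E.prank s j := by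
      intro l hl
      rcases Finset.mem_insert.1 hl with rfl | hl
      · exact Finset.mem_filter.2 ⟨hp, hlt⟩
      · rw [Finset.mem_filter] at hl
        exact Finset.mem_filter.2 ⟨hl.1, by omega⟩
    have h4 := Finset.card_le_card hsub2
    rw [Finset.card_insert_of_notMem (by
      intro hc; rw [Finset.mem_filter] at hc; omega)] at h4
    omega

lemma kept_propagate (E : Prio I S) (P : I → Pref S) {σ : I → Finset S} {s : S} {j : I}
    (hj : j ∈ kept E P σ s) :
    gsStep E P σ j = σ j ∧ propose P (gsStep E P σ) j = some s := by
  have hp : propose P σ j = some s := (mem_proposers P).1 (kept_subset E P σ s hj)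
  have hstep : gsStep E P σ j = σ j := by
    unfold gsStep
    rw [Finset.union_eq_left]
    intro s' hs'
    rw [Finset.mem_filter] at hs'
    obtain ⟨-, hps', hks'⟩ := hs'
    rw [hp] at hps'
    cases Option.some.inj hps'
    exact absurd hj hks'
  exact ⟨hstep, by rw [propose_congr P hstep, hp]⟩

lemma kept_persist (E : Prio I S) (P : I → Pref S) {σ : I → Finset S} {s : S} {r : ℕ}
    (hq : (kept E P σ s).card = E.quota s)
    (hr : ∀ j ∈ kept E P σ s, E.prank s j < r) :
    (kept E P (gsStep E P σ) s).card = E.quota s ∧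
      ∀ j ∈ kept E P (gsStep E P σ) s, E.prank s j < r := by
  have hsub : kept E P σ s ⊆ proposers P (gsStep E P σ) s := by
    intro j hj
    exact (mem_proposers P).2 (kept_propagate E P hj).2
  have hcard : E.quota s ≤ (proposers P (gsStep E P σ) s).card := by
    calc E.quota s = (kept E P σ s).card := hq.symm
      _ ≤ _ := Finset.card_le_card hsub
  refine ⟨by rw [kept_card]; omega, kept_dominance E P hsub hq hr⟩

/-- The key invariant: once a student has been rejected by a school, the school
permanently keeps a full set of students it prefers to him. -/
def GSInv (E : Prio I S) (P : I → Pref S) (σ : I → Finset S) : Prop :=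
  ∀ i s, s ∈ σ i → (kept E P σ s).card = E.quota s ∧
    ∀ j ∈ kept E P σ s, E.prank s j < E.prank s i

lemma gsInv_step (E : Prio I S) (P : I → Pref S) {σ : I → Finset S} (h : GSInv E P σ) :
    GSInv E P (gsStep E P σ) := by
  intro i s hs
  rcases (mem_gsStep E P).1 hs with hold | ⟨hp, hk⟩
  · obtain ⟨hq, hr⟩ := h i s hold
    exact kept_persist E P hq hr
  · obtain ⟨hq, hr⟩ := reject_kept_facts E P ((mem_proposers P).2 hp) hk
    exact kept_persist E P hq hr

lemma gsInv_all (E : Prio I S) (P : I → Pref S) (n : ℕ) : GSInv E P (gsState E P n) := by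
  induction n with
  | zero => intro i s hs; simp [gsState_zero] at hs
  | succ k ih => rw [gsState_succ]; exact gsInv_step E P ih

lemma final_kept (E : Prio I S) (P : I → Pref S) {i : I} {s : S}
    (h : propose P (gsState E P (gsN I S)) i = some s) :
    i ∈ kept E P (gsState E P (gsN I S)) s := by
  by_contra hk
  have hmem : s ∈ gsStep E P (gsState E P (gsN I S)) i :=
    (mem_gsStep E P).2 (Or.inr ⟨h, hk⟩)
  rw [gsFix E P] at hmem
  exact propose_not_rejected P h hmem

lemma assigned_gsMatch (E : Prio I S) (P : I → Pref S) (s : S) :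
    assigned (gsMatch E P) s = kept E P (gsState E P (gsN I S)) s := by
  ext i
  simp only [assigned, Finset.mem_filter, Finset.mem_univ, true_and]
  constructor
  · intro h; exact final_kept E P h
  · intro h; exact (mem_proposers P).1 (kept_subset E P _ s h)

lemma gsMatch_none_of_rejected (E : Prio I S) (P : I → Pref S) {i : I} {s : S}
    (h : s ∈ gsState E P (gsN I S) i) : gsMatch E P i ≠ some s := by
  intro hc
  exact propose_not_rejected P hc h

lemma gsMatch_rank_le (E : Prio I S) (P : I → Pref S) {i : I} {x : Option S}
    (hx : x = none ∨ ∃ s, x = some s ∧ s ∉ gsState E P (gsN I S) i) :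
    (P i).rank (gsMatch E P i) ≤ (P i).rank x := by
  apply propose_min
  rcases hx with rfl | ⟨s, rfl, hs⟩
  · exact none_mem_allowed _ _
  · exact some_mem_allowed.2 hs

theorem gsStable (E : Prio I S) (P : I → Pref S) : Stable E P (gsMatch E P) := by
  refine ⟨?_, ?_, ?_⟩
  · intro s
    rw [assigned_gsMatch, kept_card]
    exact min_le_left _ _
  · intro i
    exact gsMatch_rank_le E P (Or.inl rfl)
  · intro i s hblock
    obtain ⟨hpref, hseat⟩ := hblock
    have hrej : s ∈ gsState E P (gsN I S) i := by
      by_contra hs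
      have := gsMatch_rank_le E P (Or.inr ⟨s, rfl, hs⟩)
      omega
    obtain ⟨hq, hr⟩ := gsInv_all E P (gsN I S) i s hrej
    rcases hseat with hfree | ⟨j, hj, hhigher⟩
    · rw [assigned_gsMatch, hq] at hfree
      omega
    · have hjk : j ∈ kept E P (gsState E P (gsN I S)) s := by
        rw [← assigned_gsMatch]
        simp only [assigned, Finset.mem_filter, Finset.mem_univ, true_and]
        exact hj
      have := hr j hjk
      unfold Prio.higher at hhigher
      omega

lemma gsOpt_inv (E : Prio I S) (P : I → Pref S) {ν : Matching I S} (hν : Stable E P ν) :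
    ∀ n i s, s ∈ gsState E P n i → ν i ≠ some s := by
  intro n
  induction n with
  | zero => intro i s hs; simp [gsState_zero] at hs
  | succ k ih =>
      intro i s hs hνi
      rw [gsState_succ] at hs
      rcases (mem_gsStep E P).1 hs with hold | ⟨hp, hk⟩
      · exact ih i s hold hνi
      · set σ := gsState E P k with hσ
        set K' := (proposers P σ s).filter (fun j => E.prank s j < E.prank s i) with hK'
        have hKcard : E.quota s ≤ K'.card := by
          by_contra hc
          rw [hK'] at hc
          exact hk (Finset.mem_filter.2 ⟨(mem_proposers P).2 hp, by omega⟩)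
        have hrankle : ∀ j ∈ K', (P j).rank (some s) ≤ (P j).rank (ν j) := by
          intro j hj
          rw [hK', Finset.mem_filter] at hj
          have hpj : propose P σ j = some s := (mem_proposers P).1 hj.1
          have : (P j).rank (propose P σ j) ≤ (P j).rank (ν j) := by
            apply propose_min
            rcases hx : ν j with _ | s'
            · exact none_mem_allowed _ _
            · refine some_mem_allowed.2 ?_
              intro hc
              exact ih j s' hc hx
          rw [hpj] at this
          exact this
        have hiK' : i ∉ K' := by
          rw [hK', Finset.mem_filter]
          rintro ⟨-, h⟩; omega
        have hiass : i ∈ assigned ν s := by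
          simp only [assigned, Finset.mem_filter, Finset.mem_univ, true_and]
          exact hνi
        have hex : ∃ j ∈ K', ν j ≠ some s := by
          by_contra hc
          push_neg at hc
          have hsub : insert i K' ⊆ assigned ν s := by
            intro l hl
            rcases Finset.mem_insert.1 hl with rfl | hl
            · exact hiass
            · simp only [assigned, Finset.mem_filter, Finset.mem_univ, true_and]
              exact hc l hl
          have h1 := Finset.card_le_card hsub
          rw [Finset.card_insert_of_notMem hiK'] at h1
          have h2 := hν.1 s
          omega
        obtain ⟨j, hjK', hjν⟩ := hex
        apply hν.2.2 j s
        constructor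
        · have h1 := hrankle j hjK'
          have h2 : (P j).rank (some s) ≠ (P j).rank (ν j) := by
            intro h
            exact hjν ((P j).inj h).symm
          omega
        · refine Or.inr ⟨i, hνi, ?_⟩
          rw [hK', Finset.mem_filter] at hjK'
          exact hjK'.2

theorem gsOptimal (E : Prio I S) (P : I → Pref S) {ν : Matching I S} (hν : Stable E P ν) :
    ∀ i, (P i).rank (gsMatch E P i) ≤ (P i).rank (ν i) := by
  intro i
  apply gsMatch_rank_le
  rcases hx : ν i with _ | s
  · exact Or.inl rfl
  · refine Or.inr ⟨s, rfl, ?_⟩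
    intro hc
    exact gsOpt_inv E P hν (gsN I S) i s hc hx

theorem gsSO (E : Prio I S) (P : I → Pref S) : StudentOptimal E P (gsMatch E P) :=
  ⟨gsStable E P, fun ν hν i => gsOptimal E P hν i⟩

theorem DA_spec (E : Prio I S) (P : I → Pref S) : StudentOptimal E P (DA E P) := by
  unfold DA
  rw [dif_pos ⟨gsMatch E P, gsSO E P⟩]
  exact (Exists.choose_spec (⟨gsMatch E P, gsSO E P⟩ : ∃ μ, StudentOptimal E P μ))

theorem studentOptimal_unique (E : Prio I S) (P : I → Pref S) {μ ν : Matching I S}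
    (hμ : StudentOptimal E P μ) (hν : StudentOptimal E P ν) : μ = ν := by
  funext i
  have h1 := hμ.2 ν hν.1 i
  have h2 := hν.2 μ hμ.1 i
  exact (P i).inj (by omega)

theorem DA_eq_gsMatch (E : Prio I S) (P : I → Pref S) : DA E P = gsMatch E P :=
  studentOptimal_unique E P (DA_spec E P) (gsSO E P)

lemma mem_assigned {μ : Matching I S} {s : S} {i : I} :
    i ∈ assigned μ s ↔ μ i = some s := by simp [assigned]

lemma rank_lt_of_le_ne {p : Pref S} {x y : Option S}
    (h : p.rank x ≤ p.rank y) (hne : x ≠ y) : p.rank x < p.rank y := by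
  have : p.rank x ≠ p.rank y := fun hc => hne (p.inj hc)
  omega

lemma propose_rank_le_match (E : Prio I S) (P : I → Pref S) (n : ℕ) (i : I) :
    (P i).rank (propose P (gsState E P n) i) ≤ (P i).rank (gsMatch E P i) := by
  rcases Nat.le_total n (gsN I S) with h | h
  · exact propose_rank_mono E P h i
  · rw [gsState_ge_fix E P h]
    exact le_rfl

lemma rej_lt_gsN (E : Prio I S) (P : I → Pref S) {j : I} {s : S} {n : ℕ}
    (h1 : s ∈ gsState E P (n + 1) j) (h2 : s ∉ gsState E P n j) : n < gsN I S := by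
  by_contra hc
  push_neg at hc
  rw [gsState_ge_fix E P hc, ← gsState_ge_fix E P (le_trans hc (Nat.le_succ n))] at h2
  exact h2 h1

lemma rej_step_facts (E : Prio I S) (P : I → Pref S) {j : I} {s : S} {n : ℕ}
    (h1 : s ∈ gsState E P (n + 1) j) (h2 : s ∉ gsState E P n j) :
    propose P (gsState E P n) j = some s ∧ j ∉ kept E P (gsState E P n) s := by
  rw [gsState_succ] at h1
  rcases (mem_gsStep E P).1 h1 with hold | hnew
  · exact absurd hold h2
  · exact hnew

/-- Once a student is rejected by a school, the school forever keeps a full cohort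
of students with higher priority than him. -/
lemma rej_invariant (E : Prio I S) (P : I → Pref S) {j : I} {s : S} {m : ℕ}
    (h1 : s ∈ gsState E P (m + 1) j) (h2 : s ∉ gsState E P m j) :
    ∀ n, m ≤ n → (kept E P (gsState E P n) s).card = E.quota s ∧
      ∀ l ∈ kept E P (gsState E P n) s, E.prank s l < E.prank s j := by
  intro n hn
  rcases Nat.eq_or_lt_of_le hn with rfl | hlt
  · obtain ⟨hp, hk⟩ := rej_step_facts E P h1 h2
    exact reject_kept_facts E P ((mem_proposers P).2 hp) hk
  · have hmem : s ∈ gsState E P n j := gsState_mono E P hlt j h1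
    exact gsInv_all E P n j s hmem

/-- A school cannot fill strictly more seats in the optimal stable matching than in any
other stable matching. -/
lemma assigned_card_le (E : Prio I S) (P : I → Pref S) {ν : Matching I S}
    (hν : Stable E P ν) (s : S) :
    (assigned (gsMatch E P) s).card ≤ (assigned ν s).card := by
  by_contra hc
  push_neg at hc
  have hnsub : ¬ assigned (gsMatch E P) s ⊆ assigned ν s := by
    intro hsub
    exact absurd (Finset.card_le_card hsub) (by omega)
  obtain ⟨i, hi, hni⟩ := Finset.not_subset.1 hnsub
  have hμi : gsMatch E P i = some s := mem_assigned.1 hi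
  have hνi : ν i ≠ some s := fun h => hni (mem_assigned.2 h)
  have hrank : (P i).rank (some s) < (P i).rank (ν i) := by
    have h1 := gsOptimal E P hν i
    rw [hμi] at h1
    exact rank_lt_of_le_ne h1 (fun h => hνi h.symm)
  refine hν.2.2 i s ⟨hrank, Or.inl ?_⟩
  calc (assigned ν s).card < (assigned (gsMatch E P) s).card := hc
    _ ≤ E.quota s := (gsStable E P).1 s

lemma card_matched (μ : Matching I S) :
    (Finset.univ.filter (fun i => μ i ≠ none)).card = ∑ s, (assigned μ s).card := by
  classical
  have hre : Finset.univ.filter (fun i => μ i ≠ none)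
      = Finset.univ.biUnion (fun s => assigned μ s) := by
    ext i
    simp only [Finset.mem_filter, Finset.mem_univ, true_and, Finset.mem_biUnion, mem_assigned]
    exact Option.ne_none_iff_exists'
  rw [hre]
  apply Finset.card_biUnion
  intro s _ s' _ hss
  rw [Function.onFun, Finset.disjoint_left]
  intro i hi hi'
  rw [mem_assigned] at hi hi'
  rw [hi] at hi'
  exact hss (Option.some.inj hi')

/-- Rural-hospitals-style lemma: the set of matched students is the same in the
student-optimal stable matching as in any stable matching. -/
lemma matched_iff (E : Prio I S) (P : I → Pref S) {ν : Matching I S}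
    (hν : Stable E P ν) (i : I) : gsMatch E P i = none ↔ ν i = none := by
  have heasy : ∀ j, ν j ≠ none → gsMatch E P j ≠ none := by
    intro j hj hc
    rcases hx : ν j with _ | s
    · exact hj hx
    · have h1 := gsOptimal E P hν j
      rw [hc, hx] at h1
      have h2 := hν.2.1 j
      rw [hx] at h2
      have h3 : (P j).rank (some s) < (P j).rank none :=
        rank_lt_of_le_ne h2 (by simp)
      omega
  constructor
  · intro h
    by_contra hc
    exact heasy i hc h
  · intro h
    set Mμ := Finset.univ.filter (fun j => gsMatch E P j ≠ none) with hMμ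
    set Mν := Finset.univ.filter (fun j => ν j ≠ none) with hMν
    have hsub : Mν ⊆ Mμ := by
      intro j hj
      rw [hMν, Finset.mem_filter] at hj
      rw [hMμ, Finset.mem_filter]
      exact ⟨Finset.mem_univ j, heasy j hj.2⟩
    have hcard : Mμ.card ≤ Mν.card := by
      rw [hMμ, hMν, card_matched, card_matched]
      exact Finset.sum_le_sum (fun s _ => assigned_card_le E P hν s)
    have heq : Mν = Mμ := Finset.eq_of_subset_of_card_le hsub hcard
    by_contra hc
    have hiMμ : i ∈ Mμ := by
      rw [hMμ, Finset.mem_filter]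
      exact ⟨Finset.mem_univ i, hc⟩
    rw [← heq, hMν, Finset.mem_filter] at hiMμ
    exact hiMμ.2 h

/-- The blocking lemma: if a feasible individually rational matching strictly improves
some nonempty set of students over the student-optimal stable matching, then some
student *outside* this set forms a blocking pair. Stated in contradiction form. -/
theorem blocking_lemma (E : Prio I S) (P : I → Pref S) (μ' : Matching I S)
    (hF : Feasible E μ') (hIR : IndivRat P μ')
    (hBex : ∃ j, (P j).rank (μ' j) < (P j).rank (gsMatch E P j))
    (hnb : ∀ l, ¬ (P l).rank (μ' l) < (P l).rank (gsMatch E P l) →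
      ∀ s, ¬ Blocks E P μ' l s) :
    False := by
  classical
  set B : Finset I :=
    Finset.univ.filter (fun j => (P j).rank (μ' j) < (P j).rank (gsMatch E P j)) with hBdef
  have hmemB : ∀ j, j ∈ B ↔ (P j).rank (μ' j) < (P j).rank (gsMatch E P j) := by
    intro j; rw [hBdef, Finset.mem_filter]; simp
  have hnb' : ∀ l, l ∉ B → ∀ s, ¬ Blocks E P μ' l s :=
    fun l hl s => hnb l (fun hc => hl ((hmemB l).2 hc)) s
  have hBmatch : ∀ j ∈ B, ∃ s, μ' j = some s := by
    intro j hj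
    rcases hx : μ' j with _ | s
    · exfalso
      have h1 := (hmemB j).1 hj
      rw [hx] at h1
      have h2 := (gsStable E P).2.1 j
      omega
    · exact ⟨s, rfl⟩
  have hfull : ∀ j ∈ B, ∀ s, μ' j = some s →
      E.quota s ≤ (assigned (gsMatch E P) s).card ∧
      ∀ l, gsMatch E P l = some s → E.prank s l < E.prank s j := by
    intro j hj s hs
    have hrank : (P j).rank (some s) < (P j).rank (gsMatch E P j) := by
      have := (hmemB j).1 hj; rw [hs] at this; exact this
    have hnbμ := (gsStable E P).2.2 j s
    have hseat : ¬ ((assigned (gsMatch E P) s).card < E.quota s ∨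
        ∃ l, gsMatch E P l = some s ∧ E.higher s j l) := fun hc => hnbμ ⟨hrank, hc⟩
    push_neg at hseat
    obtain ⟨h1, h2⟩ := hseat
    refine ⟨by omega, ?_⟩
    intro l hl
    have h3 := h2 l hl
    unfold Prio.higher at h3
    have hlj : l ≠ j := by
      intro h
      rw [h] at hl
      rw [hl] at hrank
      omega
    have h4 : E.prank s l ≠ E.prank s j := fun h => hlj (E.inj s h)
    omega
  have hS2 : ∀ j ∈ B, ∀ s, μ' j = some s →
      ∀ l, gsMatch E P l = some s → l ∉ B → μ' l = some s := by
    intro j hj s hs l hl hlB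
    by_contra hne
    apply hnb' l hlB s
    constructor
    · have h1 : ¬ (P l).rank (μ' l) < (P l).rank (gsMatch E P l) :=
        fun hc => hlB ((hmemB l).2 hc)
      rw [hl] at h1
      have h2 : (P l).rank (some s) ≤ (P l).rank (μ' l) := by omega
      exact rank_lt_of_le_ne h2 (fun h => hne h.symm)
    · exact Or.inr ⟨j, hs, (hfull j hj s hs).2 l hl⟩
  set TT : Finset S := Finset.univ.filter (fun s => ∃ j ∈ B, μ' j = some s) with hTTdef
  have hmemTT : ∀ s, s ∈ TT ↔ ∃ j ∈ B, μ' j = some s := by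
    intro s; rw [hTTdef, Finset.mem_filter]; simp
  have hdisj : ∀ (m : Matching I S), ∀ x ∈ TT, ∀ y ∈ TT, x ≠ y →
      Disjoint (assigned m x ∩ B) (assigned m y ∩ B) := by
    intro m x _ y _ hxy
    rw [Finset.disjoint_left]
    intro i hi hi'
    have h1 := mem_assigned.1 (Finset.mem_inter.1 hi).1
    have h2 := mem_assigned.1 (Finset.mem_inter.1 hi').1
    rw [h1] at h2
    exact hxy (Option.some.inj h2)
  have hBeq : B = TT.biUnion (fun s => assigned μ' s ∩ B) := by
    ext j
    constructor
    · intro hj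
      obtain ⟨s, hs⟩ := hBmatch j hj
      exact Finset.mem_biUnion.2 ⟨s, (hmemTT s).2 ⟨j, hj, hs⟩,
        Finset.mem_inter.2 ⟨mem_assigned.2 hs, hj⟩⟩
    · intro hj
      obtain ⟨s, -, hmem⟩ := Finset.mem_biUnion.1 hj
      exact (Finset.mem_inter.1 hmem).2
  have hper : ∀ s ∈ TT, (assigned μ' s ∩ B).card ≤ (assigned (gsMatch E P) s ∩ B).card := by
    intro s hsTT
    obtain ⟨j, hjB, hjs⟩ := (hmemTT s).1 hsTT
    have h1 : E.quota s ≤ (assigned (gsMatch E P) s).card := (hfull j hjB s hjs).1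
    have h2 : (assigned (gsMatch E P) s).card ≤ E.quota s := (gsStable E P).1 s
    have h3 : (assigned μ' s).card ≤ E.quota s := hF s
    have h4 : assigned (gsMatch E P) s \ B ⊆ assigned μ' s \ B := by
      intro l hl
      rw [Finset.mem_sdiff] at hl ⊢
      exact ⟨mem_assigned.2 (hS2 j hjB s hjs l (mem_assigned.1 hl.1) hl.2), hl.2⟩
    have h5 := Finset.card_le_card h4
    have h6 := Finset.card_inter_add_card_sdiff (assigned (gsMatch E P) s) B
    have h7 := Finset.card_inter_add_card_sdiff (assigned μ' s) B
    omega
  have hcount : ∀ j ∈ B, ∃ s, gsMatch E P j = some s ∧ s ∈ TT := by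
    have hc1 : B.card = ∑ s ∈ TT, (assigned μ' s ∩ B).card := by
      conv_lhs => rw [hBeq]
      exact Finset.card_biUnion (hdisj μ')
    have hc2 : (TT.biUnion (fun s => assigned (gsMatch E P) s ∩ B)).card
        = ∑ s ∈ TT, (assigned (gsMatch E P) s ∩ B).card :=
      Finset.card_biUnion (hdisj (gsMatch E P))
    have hsubB : TT.biUnion (fun s => assigned (gsMatch E P) s ∩ B) ⊆ B := by
      intro j hj
      obtain ⟨s, -, hmem⟩ := Finset.mem_biUnion.1 hj
      exact (Finset.mem_inter.1 hmem).2
    have hble : B.card ≤ (TT.biUnion (fun s => assigned (gsMatch E P) s ∩ B)).card := by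
      rw [hc2, hc1]
      exact Finset.sum_le_sum hper
    have heq := Finset.eq_of_subset_of_card_le hsubB hble
    intro j hj
    rw [← heq] at hj
    obtain ⟨s, hsTT, hmem⟩ := Finset.mem_biUnion.1 hj
    exact ⟨s, mem_assigned.1 (Finset.mem_inter.1 hmem).1, hsTT⟩
  -- Every B-student is rejected by his μ'-school during the DA run.
  have hrejB : ∀ j ∈ B, ∀ s, μ' j = some s → s ∈ gsState E P (gsN I S) j := by
    intro j hj s hs
    by_contra hc
    have h1 := gsMatch_rank_le E P (i := j) (Or.inr ⟨s, rfl, hc⟩)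
    have h2 := (hmemB j).1 hj
    rw [hs] at h2
    omega
  set SR : Finset ℕ := (Finset.range (gsN I S)).filter
      (fun n => ∃ j ∈ B, ∃ s, μ' j = some s ∧ s ∈ gsState E P (n+1) j ∧ s ∉ gsState E P n j)
    with hSRdef
  have hSRex : ∀ j ∈ B, ∀ s, μ' j = some s →
      ∃ n ∈ SR, s ∈ gsState E P (n+1) j ∧ s ∉ gsState E P n j := by
    intro j hj s hs
    have hex : ∃ n, s ∈ gsState E P (n+1) j :=
      ⟨gsN I S, gsState_mono E P (Nat.le_succ _) j (hrejB j hj s hs)⟩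
    have hnm : s ∉ gsState E P (Nat.find hex) j := by
      intro hc
      have h0 : Nat.find hex ≠ 0 := by
        intro h0; rw [h0] at hc; simp [gsState_zero] at hc
      have hmin := Nat.find_min hex (show Nat.find hex - 1 < Nat.find hex by omega)
      apply hmin
      have heq : Nat.find hex - 1 + 1 = Nat.find hex := by omega
      rw [heq]
      exact hc
    have hmm : s ∈ gsState E P (Nat.find hex + 1) j := Nat.find_spec hex
    refine ⟨Nat.find hex, ?_, hmm, hnm⟩
    rw [hSRdef, Finset.mem_filter]
    exact ⟨Finset.mem_range.2 (rej_lt_gsN E P hmm hnm), j, hj, s, hs, hmm, hnm⟩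
  have hSRne : SR.Nonempty := by
    obtain ⟨j0', hj0'⟩ := hBex
    have hj0'B : j0' ∈ B := (hmemB j0').2 hj0'
    obtain ⟨s0', hs0'⟩ := hBmatch j0' hj0'B
    obtain ⟨n, hn, -⟩ := hSRex j0' hj0'B s0' hs0'
    exact ⟨n, hn⟩
  set nstar := SR.max' hSRne with hnstardef
  set AR : Finset ℕ := (Finset.range (gsN I S + 1)).filter
      (fun n => ∃ j ∈ B, propose P (gsState E P n) j = gsMatch E P j ∧
        ∀ n' < n, propose P (gsState E P n') j ≠ gsMatch E P j) with hARdef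
  have hARex : ∀ j ∈ B, ∃ n ∈ AR, propose P (gsState E P n) j = gsMatch E P j ∧
      ∀ n' < n, propose P (gsState E P n') j ≠ gsMatch E P j := by
    intro j hj
    have hex : ∃ n, propose P (gsState E P n) j = gsMatch E P j := ⟨gsN I S, rfl⟩
    refine ⟨Nat.find hex, ?_, Nat.find_spec hex, fun n' hn' => Nat.find_min hex hn'⟩
    rw [hARdef, Finset.mem_filter]
    refine ⟨Finset.mem_range.2 ?_, j, hj, Nat.find_spec hex,
      fun n' hn' => Nat.find_min hex hn'⟩
    have := Nat.find_min' hex (rfl : propose P (gsState E P (gsN I S)) j = gsMatch E P j)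
    omega
  have hARne : AR.Nonempty := by
    obtain ⟨j0', hj0'⟩ := hBex
    obtain ⟨n, hn, -⟩ := hARex j0' ((hmemB j0').2 hj0')
    exact ⟨n, hn⟩
  set nmax := AR.max' hARne with hnmaxdef
  have hstarmax : nstar < nmax := by
    obtain ⟨-, j', hj'B, s', hs', hmem1, hmem2⟩ := Finset.mem_filter.1 (SR.max'_mem hSRne)
    obtain ⟨hp', -⟩ := rej_step_facts E P hmem1 hmem2
    have hr1 : (P j').rank (some s') < (P j').rank (gsMatch E P j') := by
      have := (hmemB j').1 hj'B; rw [hs'] at this; exact this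
    obtain ⟨n1, hn1AR, hn1spec, -⟩ := hARex j' hj'B
    have hgt : nstar < n1 := by
      by_contra hle
      push_neg at hle
      have h2 := propose_rank_mono E P hle j'
      rw [hn1spec, hp'] at h2
      omega
    exact lt_of_lt_of_le hgt (AR.le_max' n1 hn1AR)
  obtain ⟨-, x, hxB, hxprop, hxmin⟩ := Finset.mem_filter.1 (AR.max'_mem hARne)
  obtain ⟨sx, hμx, hsxTT⟩ := hcount x hxB
  obtain ⟨j0, hj0B, hj0s⟩ := (hmemTT sx).1 hsxTT
  obtain ⟨m0, hm0SR, hm0mem, hm0nmem⟩ := hSRex j0 hj0B sx hj0s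
  have hm0le : m0 ≤ nstar := SR.le_max' m0 hm0SR
  obtain ⟨hKcard, hKr⟩ := rej_invariant E P hm0mem hm0nmem (nmax - 1) (by omega)
  have hsucc : gsState E P nmax = gsStep E P (gsState E P (nmax - 1)) := by
    have h1 : nmax - 1 + 1 = nmax := by omega
    conv_lhs => rw [← h1]
    rw [gsState_succ]
  have hKsub : kept E P (gsState E P (nmax - 1)) sx ⊆ proposers P (gsState E P nmax) sx := by
    intro l hl
    rw [hsucc]
    exact (mem_proposers P).2 (kept_propagate E P hl).2
  have hxpropsx : propose P (gsState E P nmax) x = some sx := by rw [hxprop, hμx]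
  have hxKold : x ∉ kept E P (gsState E P (nmax - 1)) sx := by
    intro hc
    have h1 := (mem_proposers P).1 (kept_subset E P _ sx hc)
    exact hxmin (nmax - 1) (by omega) (by rw [h1, hμx])
  have hxkept : x ∈ kept E P (gsState E P nmax) sx := by
    by_contra hc
    have hmem : sx ∈ gsState E P (nmax + 1) x := by
      rw [gsState_succ]
      exact (mem_gsStep E P).2 (Or.inr ⟨hxpropsx, hc⟩)
    exact gsMatch_none_of_rejected E P (gsState_subset_fix E P (nmax + 1) x hmem) hμx
  have hcardcur : (kept E P (gsState E P nmax) sx).card = E.quota sx := by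
    rw [kept_card]
    have h1 : E.quota sx ≤ (proposers P (gsState E P nmax) sx).card :=
      hKcard ▸ Finset.card_le_card hKsub
    omega
  have hlex : ∃ l ∈ kept E P (gsState E P (nmax - 1)) sx,
      l ∉ kept E P (gsState E P nmax) sx := by
    by_contra hc
    push_neg at hc
    have hsub2 : insert x (kept E P (gsState E P (nmax - 1)) sx)
        ⊆ kept E P (gsState E P nmax) sx := by
      intro l hl
      rcases Finset.mem_insert.1 hl with rfl | hl
      · exact hxkept
      · exact hc l hl
    have h1 := Finset.card_le_card hsub2
    rw [Finset.card_insert_of_notMem hxKold] at h1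
    omega
  obtain ⟨l, hlKold, hlnk⟩ := hlex
  have hlprop : propose P (gsState E P nmax) l = some sx := (mem_proposers P).1 (hKsub hlKold)
  have hlrej : sx ∈ gsState E P (nmax + 1) l := by
    rw [gsState_succ]
    exact (mem_gsStep E P).2 (Or.inr ⟨hlprop, hlnk⟩)
  have hlμ : gsMatch E P l ≠ some sx :=
    gsMatch_none_of_rejected E P (gsState_subset_fix E P (nmax + 1) l hlrej)
  have hlrank : (P l).rank (some sx) < (P l).rank (gsMatch E P l) := by
    have h1 := propose_rank_le_match E P nmax l
    rw [hlprop] at h1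
    exact rank_lt_of_le_ne h1 (fun h => hlμ h.symm)
  have hlB : l ∉ B := by
    intro hlB
    obtain ⟨n1, hn1AR, hn1spec, -⟩ := hARex l hlB
    have hn1le : n1 ≤ nmax := AR.le_max' n1 hn1AR
    have h2 := propose_rank_mono E P hn1le l
    rw [hn1spec, hlprop] at h2
    omega
  refine hnb' l hlB sx ⟨?_, Or.inr ⟨j0, hj0s, hKr l hlKold⟩⟩
  have h1 : ¬ (P l).rank (μ' l) < (P l).rank (gsMatch E P l) :=
    fun hc => hlB ((hmemB l).2 hc)
  omega

/-- A preference finding only the school `s` acceptable. -/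
noncomputable def pOnly (s : S) : Pref S where
  rank x := match x with
    | none => 1
    | some s' => if s' = s then 0 else 2 + (Fintype.equivFin S s' : ℕ)
  inj := by
    intro x y h
    match x, y with
    | none, none => rfl
    | none, some b =>
        simp only at h
        split_ifs at h <;> omega
    | some a, none =>
        simp only at h
        split_ifs at h <;> omega
    | some a, some b =>
        simp only at h
        split_ifs at h with h1 h2
        · rw [h1, h2]
        · omega
        · omega
        · have hval : (Fintype.equivFin S a : ℕ) = (Fintype.equivFin S b : ℕ) := by omega
          have : a = b := (Fintype.equivFin S).injective (Fin.val_injective hval)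
          rw [this]

lemma pOnly_acc (s : S) : (pOnly s).rank (some s) < (pOnly s).rank none := by
  simp [pOnly]

lemma pOnly_unacc {s s' : S} (h : s' ≠ s) :
    (pOnly s).rank none < (pOnly s).rank (some s') := by
  simp [pOnly, h]
  omega

lemma blocks_congr (E : Prio I S) {R R' : I → Pref S} {μ : Matching I S} {l : I} {s : S}
    (h : R l = R' l) : Blocks E R μ l s ↔ Blocks E R' μ l s := by
  unfold Blocks; rw [h]

/-- Roth–Sotomayor Lemma 4.8 (generalized): if a student replaces his report by one that
finds only his DA assignment acceptable, his DA assignment is unchanged. -/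
lemma truncation_lemma (E : Prio I S) (P : I → Pref S) (i : I) (s : S) (p : Pref S)
    (hps : p.rank (some s) < p.rank none)
    (hpo : ∀ s', s' ≠ s → p.rank none < p.rank (some s'))
    (hDA : DA E P i = some s) :
    DA E (Function.update P i p) i = some s := by
  classical
  set P' := Function.update P i p with hP'def
  have hP'i : P' i = p := Function.update_self i p P
  have hP'ne : ∀ j, j ≠ i → P' j = P j := fun j hj => Function.update_of_ne hj p P
  have hμ := DA_spec E P
  have hstable : Stable E P' (DA E P) := by
    refine ⟨hμ.1.1, ?_, ?_⟩
    · intro j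
      by_cases hj : j = i
      · subst hj
        rw [hP'i, hDA]
        omega
      · rw [hP'ne j hj]
        exact hμ.1.2.1 j
    · intro j s' hb
      obtain ⟨h1, h2⟩ := hb
      by_cases hj : j = i
      · subst hj
        rw [hP'i, hDA] at h1
        by_cases hss : s' = s
        · subst hss; omega
        · have := hpo s' hss; omega
      · rw [hP'ne j hj] at h1
        exact hμ.1.2.2 j s' ⟨h1, h2⟩
  have hν := DA_spec E P'
  have h1 := hν.2 _ hstable i
  rw [hP'i, hDA] at h1
  rcases hx : DA E P' i with _ | s''
  · rw [hx] at h1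
    omega
  · rw [hx] at h1
    by_cases hss : s'' = s
    · rw [hss]
    · have := hpo s'' hss
      omega

/-- A student with no acceptable school is unassigned by DA. -/
lemma DA_none (E : Prio I S) (P : I → Pref S) (i : I)
    (hp : ∀ s : S, (P i).rank none < (P i).rank (some s)) : DA E P i = none := by
  have hIR := (DA_spec E P).1.2.1 i
  rcases hx : DA E P i with _ | s
  · rfl
  · rw [hx] at hIR
    have := hp s
    omega

/-- Strategy-proofness of the student-proposing deferred acceptance mechanism. -/
theorem DA_sp (E : Prio I S) (P : I → Pref S) (i : I) (r : Pref S) :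
    r.rank (DA E (Function.update P i r) i) ≤ r.rank (DA E P i) := by
  classical
  by_contra hc
  push_neg at hc
  set R' := Function.update P i r with hR'def
  have hR'i : R' i = r := Function.update_self i r P
  have hR'ne : ∀ j, j ≠ i → R' j = P j := fun j hj => Function.update_of_ne hj r P
  have hμ := DA_spec E R'
  have hIRμ : r.rank (DA E R' i) ≤ r.rank none := by
    have := hμ.1.2.1 i; rw [hR'i] at this; exact this
  obtain ⟨s, hs⟩ : ∃ s, DA E P i = some s := by
    rcases hx : DA E P i with _ | s
    · exfalso; rw [hx] at hc; omega
    · exact ⟨s, rfl⟩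
  rw [hs] at hc
  have h48 := truncation_lemma E P i s (pOnly s) (pOnly_acc s)
    (fun s' h => pOnly_unacc h) hs
  set P'' := Function.update P i (pOnly s) with hP''def
  have hP''ne : ∀ j, j ≠ i → P'' j = P j := fun j hj => Function.update_of_ne hj _ P
  have hμ'' := DA_spec E P''
  have hrs : r.rank (some s) < r.rank (gsMatch E R' i) := by
    rw [DA_eq_gsMatch E R'] at hc
    exact hc
  apply blocking_lemma E R' (DA E P'') hμ''.1.1
  · intro j
    by_cases hj : j = i
    · subst hj
      rw [hR'i, h48]
      omega
    · rw [hR'ne j hj, ← hP''ne j hj]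
      exact hμ''.1.2.1 j
  · refine ⟨i, ?_⟩
    rw [hR'i, h48]
    exact hrs
  · intro l hl s'' hb
    by_cases hli : l = i
    · subst hli
      rw [hR'i, h48] at hl
      exact hl hrs
    · have hEq : R' l = P'' l := by rw [hR'ne l hli, hP''ne l hli]
      rw [blocks_congr E hEq] at hb
      exact hμ''.1.2.2 l s'' hb

section RankLemmas

lemma trunc_none (A : S → Prop) [DecidablePred A] (p : Pref S) :
    (trunc A p).rank none = p.rank none := by
  simp [trunc, goodB]

lemma trunc_good {A : S → Prop} [DecidablePred A] {p : Pref S} {s : S} (h : A s) :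
    (trunc A p).rank (some s) = p.rank (some s) := by
  simp [trunc, goodB, h]

lemma trunc_bad {A : S → Prop} [DecidablePred A] {p : Pref S} {s : S} (h : ¬ A s) :
    (trunc A p).rank (some s) = bnd p + p.rank (some s) := by
  simp [trunc, goodB, h]

lemma trunc_acc_iff {A : S → Prop} [DecidablePred A] {p : Pref S} {s : S} :
    (trunc A p).rank (some s) < (trunc A p).rank none ↔
      A s ∧ p.rank (some s) < p.rank none := by
  by_cases h : A s
  · rw [trunc_good h, trunc_none]
    simp [h]
  · rw [trunc_bad h, trunc_none]
    have := rank_lt_bnd p none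
    constructor
    · intro hlt; omega
    · rintro ⟨hA, -⟩; exact absurd hA h

lemma resh_none (t : S → ℕ) (p : Pref S) :
    (reshuffle t p).rank none = (Finset.univ.sup t + 1) * bnd p := rfl

lemma resh_acc {t : S → ℕ} {p : Pref S} {s : S} (h : p.rank (some s) < p.rank none) :
    (reshuffle t p).rank (some s) = t s * bnd p + p.rank (some s) := by
  simp [reshuffle, h]

lemma resh_unacc {t : S → ℕ} {p : Pref S} {s : S} (h : ¬ p.rank (some s) < p.rank none) :
    (reshuffle t p).rank (some s)
      = (Finset.univ.sup t + 1) * bnd p + 1 + p.rank (some s) := by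
  simp [reshuffle, h]

lemma resh_lt_none {t : S → ℕ} {p : Pref S} {s : S} (h : p.rank (some s) < p.rank none) :
    (reshuffle t p).rank (some s) < (reshuffle t p).rank none := by
  rw [resh_acc h, resh_none]
  exact mul_add_lt (Finset.le_sup (Finset.mem_univ s)) (rank_lt_bnd p (some s))

lemma resh_acc_iff {t : S → ℕ} {p : Pref S} {s : S} :
    (reshuffle t p).rank (some s) < (reshuffle t p).rank none ↔
      p.rank (some s) < p.rank none := by
  constructor
  · intro h
    by_contra hc
    rw [resh_unacc hc, resh_none] at h
    omega
  · exact resh_lt_none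

lemma resh_tier_lt {t : S → ℕ} {p : Pref S} {s s' : S}
    (hs : p.rank (some s) < p.rank none) (hs' : p.rank (some s') < p.rank none)
    (h : t s < t s') :
    (reshuffle t p).rank (some s) < (reshuffle t p).rank (some s') := by
  rw [resh_acc hs, resh_acc hs']
  have h1 : t s * bnd p + p.rank (some s) < (t s + 1) * bnd p := by
    have := rank_lt_bnd p (some s)
    nlinarith [rank_lt_bnd p (some s)]
  have h2 : (t s + 1) * bnd p ≤ t s' * bnd p := Nat.mul_le_mul_right _ (by omega)
  omega

lemma resh_same_tier {t : S → ℕ} {p : Pref S} {s s' : S}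
    (hs : p.rank (some s) < p.rank none) (hs' : p.rank (some s') < p.rank none)
    (h : t s = t s') :
    ((reshuffle t p).rank (some s) < (reshuffle t p).rank (some s') ↔
      p.rank (some s) < p.rank (some s')) := by
  rw [resh_acc hs, resh_acc hs', h]
  omega

lemma resh_acc_unacc {t : S → ℕ} {p : Pref S} {s s' : S}
    (hs : p.rank (some s) < p.rank none) (hs' : ¬ p.rank (some s') < p.rank none) :
    (reshuffle t p).rank (some s) < (reshuffle t p).rank (some s') := by
  have h1 := resh_lt_none (t := t) hs
  rw [resh_none] at h1
  rw [resh_unacc hs']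
  omega

/-- Lower bound on the reshuffled rank of an acceptable school via its tier. -/
lemma resh_tier_le_of_lt {t : S → ℕ} {p : Pref S} {s s' : S}
    (hs : p.rank (some s) < p.rank none) (hs' : p.rank (some s') < p.rank none)
    (h : (reshuffle t p).rank (some s) < (reshuffle t p).rank (some s')) :
    t s ≤ t s' := by
  by_contra hc
  push_neg at hc
  have := resh_tier_lt hs' hs hc
  omega

end RankLemmas

section TDAeq

/-- The reshuffled profile. -/
noncomputable def reshP (t : S → ℕ) (Q : I → Pref S) : I → Pref S :=
  fun j => reshuffle t (Q j)

@[simp] lemma reshP_app (t : S → ℕ) (Q : I → Pref S) (j : I) :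
    reshP t Q j = reshuffle t (Q j) := rfl

/-- Restriction of an assignment to schools in tiers `≤ k`. -/
def cutLE (t : S → ℕ) (k : ℕ) : Option S → Option S
  | none => none
  | some s => if t s ≤ k then some s else none

/-- Restriction of an assignment to schools in tier exactly `k`. -/
def cutEQ (t : S → ℕ) (k : ℕ) : Option S → Option S
  | none => none
  | some s => if t s = k then some s else none

lemma cutLE_eq_some {t : S → ℕ} {k : ℕ} {x : Option S} {s : S} :
    cutLE t k x = some s ↔ x = some s ∧ t s ≤ k := by
  match x with
  | none => simp [cutLE]
  | some s' =>
      simp only [cutLE]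
      by_cases h : t s' ≤ k
      · rw [if_pos h]
        constructor
        · intro he; cases Option.some.inj he; exact ⟨rfl, h⟩
        · rintro ⟨he, -⟩; rw [Option.some.inj he]
      · rw [if_neg h]
        constructor
        · intro he; exact absurd he (by simp)
        · rintro ⟨he, hk⟩; cases Option.some.inj he; exact absurd hk h

lemma cutEQ_eq_some {t : S → ℕ} {k : ℕ} {x : Option S} {s : S} :
    cutEQ t k x = some s ↔ x = some s ∧ t s = k := by
  match x with
  | none => simp [cutEQ]
  | some s' =>
      simp only [cutEQ]
      by_cases h : t s' = k
      · rw [if_pos h]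
        constructor
        · intro he; cases Option.some.inj he; exact ⟨rfl, h⟩
        · rintro ⟨he, -⟩; rw [Option.some.inj he]
      · rw [if_neg h]
        constructor
        · intro he; exact absurd he (by simp)
        · rintro ⟨he, hk⟩; cases Option.some.inj he; exact absurd hk h

lemma cutLE_cases {t : S → ℕ} {k : ℕ} (x : Option S) :
    cutLE t k x = x ∧ (∀ s, x = some s → t s ≤ k) ∨
      cutLE t k x = none ∧ (x = none ∨ ∃ s, x = some s ∧ ¬ t s ≤ k) := by
  match x with
  | none => exact Or.inl ⟨rfl, by simp⟩
  | some s =>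
      by_cases h : t s ≤ k
      · refine Or.inl ⟨by simp [cutLE, h], ?_⟩
        intro s' hs'; cases Option.some.inj hs'; exact h
      · exact Or.inr ⟨by simp [cutLE, h], Or.inr ⟨s, rfl, h⟩⟩

lemma cutEQ_cases {t : S → ℕ} {k : ℕ} (x : Option S) :
    cutEQ t k x = x ∧ (∀ s, x = some s → t s = k) ∨
      cutEQ t k x = none ∧ (x = none ∨ ∃ s, x = some s ∧ t s ≠ k) := by
  match x with
  | none => exact Or.inl ⟨rfl, by simp⟩
  | some s =>
      by_cases h : t s = k
      · refine Or.inl ⟨by simp [cutEQ, h], ?_⟩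
        intro s' hs'; cases Option.some.inj hs'; exact h
      · exact Or.inr ⟨by simp [cutEQ, h], Or.inr ⟨s, rfl, h⟩⟩

/-- The key round lemma: assuming rounds `1..k` of TDA reproduce the DA assignments of
the reshuffled profile in tiers `≤ k`, round `k+1` reproduces the tier-`k+1` assignments. -/
theorem round_lemma (E : Prio I S) (t : S → ℕ) (Q : I → Pref S) (k : ℕ)
    (hIH : ∀ j, TDAaux E t Q k j = cutLE t k (DA E (reshP t Q) j)) (i : I) :
    DA E (fun j => if TDAaux E t Q k j = none then trunc (fun s => t s = k + 1) (Q j)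
      else trunc (fun _ => False) (Q j)) i
      = cutEQ t (k + 1) (DA E (reshP t Q) i) := by
  set μt := DA E (reshP t Q) with hμtdef
  set P' : I → Pref S := fun j => if TDAaux E t Q k j = none
    then trunc (fun s => t s = k + 1) (Q j)
    else trunc (fun _ => False) (Q j) with hP'def
  set ν : Matching I S := fun j => cutEQ t (k + 1) (μt j) with hνdef
  show DA E P' i = ν i
  have hspec := DA_spec E (reshP t Q)
  rw [← hμtdef] at hspec
  have hacc : ∀ j s, μt j = some s → (Q j).rank (some s) < (Q j).rank none := by
    intro j s hj
    have hIR := hspec.1.2.1 j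
    simp only [reshP_app] at hIR
    rw [hj] at hIR
    exact resh_acc_iff.1 (rank_lt_of_le_ne hIR (by simp))
  have hpart : ∀ j, TDAaux E t Q k j = none ↔
      (μt j = none ∨ ∃ s, μt j = some s ∧ ¬ t s ≤ k) := by
    intro j
    rw [hIH j]
    rcases cutLE_cases (t := t) (k := k) (μt j) with ⟨h1, h2⟩ | ⟨h1, h2⟩
    · rw [h1]
      constructor
      · intro h; exact Or.inl h
      · rintro (h | ⟨s, hs, hns⟩)
        · exact h
        · exact absurd (h2 s hs) hns
    · rw [h1]
      exact ⟨fun _ => h2, fun _ => rfl⟩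
  have hP'p : ∀ j, TDAaux E t Q k j = none →
      P' j = trunc (fun s => t s = k + 1) (Q j) := by
    intro j hj; rw [hP'def]; simp only; rw [if_pos hj]
  have hP'm : ∀ j, ¬ TDAaux E t Q k j = none →
      P' j = trunc (fun _ => False) (Q j) := by
    intro j hj; rw [hP'def]; simp only; rw [if_neg hj]
  have hν_some : ∀ j s, ν j = some s ↔ (μt j = some s ∧ t s = k + 1) := by
    intro j s; rw [hνdef]; exact cutEQ_eq_some
  have hpart' : ∀ j s, μt j = some s → t s = k + 1 → TDAaux E t Q k j = none := by
    intro j s h1 h2; rw [hpart j]; exact Or.inr ⟨s, h1, by omega⟩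
  have hν_feas : Feasible E ν := by
    intro s
    refine le_trans (Finset.card_le_card ?_) (hspec.1.1 s)
    intro j hj
    rw [mem_assigned] at hj ⊢
    exact ((hν_some j s).1 hj).1
  have hν_IR : IndivRat P' ν := by
    intro j
    rcases hx : ν j with _ | s
    · exact le_rfl
    · obtain ⟨h1, h2⟩ := (hν_some j s).1 hx
      rw [hP'p j (hpart' j s h1 h2), trunc_good (A := fun s => t s = k + 1) h2, trunc_none]
      exact le_of_lt (hacc j s h1)
  have hν_nb : ∀ j s, ¬ Blocks E P' ν j s := by
    intro j s hb
    obtain ⟨h1, h2⟩ := hb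
    by_cases hjp : TDAaux E t Q k j = none
    · have hIRν := hν_IR j
      have hlt : (P' j).rank (some s) < (P' j).rank none := lt_of_lt_of_le h1 hIRν
      rw [hP'p j hjp] at hlt
      obtain ⟨hsk, hsacc⟩ := trunc_acc_iff.1 hlt
      apply hspec.1.2.2 j s
      constructor
      · show (reshuffle t (Q j)).rank (some s) < (reshuffle t (Q j)).rank (μt j)
        rcases hx : ν j with _ | s'
        · rcases hμx : μt j with _ | s''
          · exact resh_lt_none hsacc
          · have hs''acc := hacc j s'' hμx
            have h5 : ¬ t s'' ≤ k := by
              rcases (hpart j).1 hjp with h | ⟨s0, hs0, hns⟩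
              · rw [hμx] at h; exact absurd h (by simp)
              · rw [hμx] at hs0; cases Option.some.inj hs0; exact hns
            have h6 : t s'' ≠ k + 1 := by
              intro hc
              have := (hν_some j s'').2 ⟨hμx, hc⟩
              rw [hx] at this; exact absurd this (by simp)
            exact resh_tier_lt hsacc hs''acc (by omega)
        · obtain ⟨hμx, hsk'⟩ := (hν_some j s').1 hx
          rw [hμx]
          have hs'acc := hacc j s' hμx
          rw [hP'p j hjp, hx, trunc_good (A := fun s => t s = k + 1) hsk, trunc_good (A := fun s => t s = k + 1) hsk'] at h1
          exact (resh_same_tier hsacc hs'acc (by omega)).2 h1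
      · rcases h2 with hfree | ⟨j', hj', hh⟩
        · left
          have heq : assigned ν s = assigned μt s := by
            ext j'
            rw [mem_assigned, mem_assigned]
            constructor
            · intro h; exact ((hν_some j' s).1 h).1
            · intro h; exact (hν_some j' s).2 ⟨h, hsk⟩
          rw [← heq]
          exact hfree
        · right
          exact ⟨j', ((hν_some j' s).1 hj').1, hh⟩
    · have hIRν := hν_IR j
      rw [hP'm j hjp] at h1 hIRν
      have h3 := lt_of_lt_of_le h1 hIRν
      rw [trunc_bad (A := fun _ => False) (fun h => h), trunc_none] at h3
      have := rank_lt_bnd (Q j) none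
      omega
  have hν_st : Stable E P' ν := ⟨hν_feas, hν_IR, hν_nb⟩
  have hLspec := DA_spec E P'
  have hrural : ∀ j, DA E P' j = none ↔ ν j = none := by
    intro j
    rw [DA_eq_gsMatch E P']
    exact matched_iff E P' hν_st j
  have hLnu : ∀ j, (P' j).rank (DA E P' j) ≤ (P' j).rank (ν j) :=
    fun j => hLspec.2 ν hν_st j
  have hLtier : ∀ j s', DA E P' j = some s' →
      TDAaux E t Q k j = none ∧ t s' = k + 1 ∧ (Q j).rank (some s') < (Q j).rank none := by
    intro j s' hj
    have hIRj := hLspec.1.2.1 j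
    rw [hj] at hIRj
    have hlt := rank_lt_of_le_ne hIRj (by simp)
    by_cases hjp : TDAaux E t Q k j = none
    · rw [hP'p j hjp] at hlt
      obtain ⟨ha, hb'⟩ := trunc_acc_iff.1 hlt
      exact ⟨hjp, ha, hb'⟩
    · rw [hP'm j hjp] at hlt
      exact (trunc_acc_iff.1 hlt).1.elim
  set Lam : Matching I S := fun j => if TDAaux E t Q k j = none
      then (if DA E P' j = none then μt j else DA E P' j)
      else μt j with hLamdef
  have hLam_m : ∀ j, ¬ TDAaux E t Q k j = none → Lam j = μt j := by
    intro j hj; rw [hLamdef]; simp only; rw [if_neg hj]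
  have hLam_pn : ∀ j, TDAaux E t Q k j = none → DA E P' j = none → Lam j = μt j := by
    intro j hj hD; rw [hLamdef]; simp only; rw [if_pos hj, if_pos hD]
  have hLam_ps : ∀ j, TDAaux E t Q k j = none → ¬ DA E P' j = none → Lam j = DA E P' j := by
    intro j hj hD; rw [hLamdef]; simp only; rw [if_pos hj, if_neg hD]
  have hLam_val : ∀ j, Lam j = μt j ∨
      (Lam j = DA E P' j ∧ ¬ DA E P' j = none ∧ TDAaux E t Q k j = none) := by
    intro j
    by_cases hjp : TDAaux E t Q k j = none
    · by_cases hD : DA E P' j = none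
      · exact Or.inl (hLam_pn j hjp hD)
      · exact Or.inr ⟨hLam_ps j hjp hD, hD, hjp⟩
    · exact Or.inl (hLam_m j hjp)
  have hLam_low : ∀ s, t s ≤ k → assigned Lam s = assigned μt s := by
    intro s hsk
    ext j
    rw [mem_assigned, mem_assigned]
    constructor
    · intro hj
      rcases hLam_val j with h | ⟨h, hne, hp⟩
      · rw [← h]; exact hj
      · rw [h] at hj
        obtain ⟨-, hs'k, -⟩ := hLtier j s hj
        omega
    · intro hj
      have hm : ¬ TDAaux E t Q k j = none := by
        rw [hIH j]
        rw [cutLE_eq_some.2 ⟨hj, hsk⟩]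
        simp
      rw [hLam_m j hm]
      exact hj
  have hLam_mid : ∀ s, t s = k + 1 → assigned Lam s = assigned (DA E P') s := by
    intro s hsk
    ext j
    rw [mem_assigned, mem_assigned]
    constructor
    · intro hj
      by_cases hjp : TDAaux E t Q k j = none
      · by_cases hD : DA E P' j = none
        · rw [hLam_pn j hjp hD] at hj
          have h2 := (hν_some j s).2 ⟨hj, hsk⟩
          rw [(hrural j).1 hD] at h2
          exact absurd h2 (by simp)
        · rw [hLam_ps j hjp hD] at hj
          exact hj
      · rw [hLam_m j hjp] at hj
        exact absurd (hpart' j s hj hsk) hjp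
    · intro hj
      obtain ⟨hp, -, -⟩ := hLtier j s hj
      have hne : ¬ DA E P' j = none := by rw [hj]; simp
      rw [hLam_ps j hp hne]
      exact hj
  have hLam_high : ∀ s, ¬ t s ≤ k + 1 → assigned Lam s = assigned μt s := by
    intro s hsk
    ext j
    rw [mem_assigned, mem_assigned]
    constructor
    · intro hj
      rcases hLam_val j with h | ⟨h, hne, hp⟩
      · rw [← h]; exact hj
      · rw [h] at hj
        obtain ⟨-, h2, -⟩ := hLtier j s hj
        omega
    · intro hj
      by_cases hjp : TDAaux E t Q k j = none
      · by_cases hD : DA E P' j = none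
        · rw [hLam_pn j hjp hD]; exact hj
        · exfalso
          have hν2 : ¬ ν j = none := fun hc => hD ((hrural j).2 hc)
          rcases hx : ν j with _ | s'
          · exact hν2 hx
          · obtain ⟨hμx, hsk'⟩ := (hν_some j s').1 hx
            rw [hj] at hμx
            cases Option.some.inj hμx
            omega
      · rw [hLam_m j hjp]; exact hj
  have hLam_IR : IndivRat (reshP t Q) Lam := by
    intro j
    rcases hLam_val j with h | ⟨h, hne, hp⟩
    · rw [h]; exact hspec.1.2.1 j
    · rw [h]
      rcases hx : DA E P' j with _ | s'
      · exact le_rfl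
      · obtain ⟨-, hs'k, hs'acc⟩ := hLtier j s' hx
        exact le_of_lt (resh_lt_none hs'acc)
  have hLam_feas : Feasible E Lam := by
    intro s
    rcases Nat.lt_trichotomy (t s) (k + 1) with h | h | h
    · rw [hLam_low s (by omega)]; exact hspec.1.1 s
    · rw [hLam_mid s h]; exact hLspec.1.1 s
    · rw [hLam_high s (by omega)]; exact hspec.1.1 s
  have hLam_nb : ∀ j s, ¬ Blocks E (reshP t Q) Lam j s := by
    intro j s hb
    obtain ⟨h1, h2⟩ := hb
    have hsacc : (Q j).rank (some s) < (Q j).rank none := by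
      have h3 := lt_of_lt_of_le h1 (hLam_IR j)
      exact resh_acc_iff.1 h3
    rcases Nat.lt_trichotomy (t s) (k + 1) with hts | hts | hts
    · apply hspec.1.2.2 j s
      refine ⟨?_, ?_⟩
      · show (reshuffle t (Q j)).rank (some s) < (reshuffle t (Q j)).rank (μt j)
        rcases hLam_val j with h | ⟨h, hne, hp⟩
        · rw [← h]; exact h1
        · rcases hx : DA E P' j with _ | s'
          · exact absurd hx hne
          · have hν2 : ¬ ν j = none := fun hc => hne ((hrural j).2 hc)
            rcases hy : ν j with _ | s''
            · exact absurd hy hν2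
            · obtain ⟨hμy, hsk''⟩ := (hν_some j s'').1 hy
              rw [hμy]
              exact resh_tier_lt hsacc (hacc j s'' hμy) (by omega)
      · rcases h2 with hfree | ⟨j', hj', hh⟩
        · left
          rw [← hLam_low s (by omega)]
          exact hfree
        · right
          refine ⟨j', ?_, hh⟩
          have : j' ∈ assigned μt s := by
            rw [← hLam_low s (by omega)]; exact mem_assigned.2 hj'
          exact mem_assigned.1 this
    · apply hLspec.1.2.2 j s
      have hjpart : TDAaux E t Q k j = none := by
        by_contra hjm
        have hL := hLam_m j hjm
        rcases hx : μt j with _ | s0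
        · exact hjm ((hpart j).2 (Or.inl hx))
        · have hs0k : t s0 ≤ k := by
            by_contra hns
            exact hjm ((hpart j).2 (Or.inr ⟨s0, hx, hns⟩))
          rw [hL, hx] at h1
          have := resh_tier_le_of_lt hsacc (hacc j s0 hx) h1
          omega
      refine ⟨?_, ?_⟩
      · rw [hP'p j hjpart, trunc_good (A := fun s => t s = k + 1) (show t s = k + 1 by omega)]
        by_cases hD : DA E P' j = none
        · rw [hD, trunc_none]; exact hsacc
        · rcases hx : DA E P' j with _ | s'
          · exact absurd hx hD
          · obtain ⟨-, hs'k, hs'acc⟩ := hLtier j s' hx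
            rw [trunc_good (A := fun s => t s = k + 1) hs'k]
            have hL := hLam_ps j hjpart hD
            rw [hL, hx] at h1
            exact (resh_same_tier hsacc hs'acc (by omega)).1 h1
      · rcases h2 with hfree | ⟨j', hj', hh⟩
        · left; rw [← hLam_mid s (by omega)]; exact hfree
        · right
          refine ⟨j', ?_, hh⟩
          have : j' ∈ assigned (DA E P') s := by
            rw [← hLam_mid s (by omega)]; exact mem_assigned.2 hj'
          exact mem_assigned.1 this
    · apply hspec.1.2.2 j s
      refine ⟨?_, ?_⟩
      · show (reshuffle t (Q j)).rank (some s) < (reshuffle t (Q j)).rank (μt j)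
        rcases hLam_val j with h | ⟨h, hne, hp⟩
        · rw [← h]; exact h1
        · exfalso
          rcases hx : DA E P' j with _ | s'
          · exact hne hx
          · obtain ⟨-, hs'k, hs'acc⟩ := hLtier j s' hx
            rw [h, hx] at h1
            have := resh_tier_le_of_lt hsacc hs'acc h1
            omega
      · rcases h2 with hfree | ⟨j', hj', hh⟩
        · left
          rw [← hLam_high s (by omega)]
          exact hfree
        · right
          refine ⟨j', ?_, hh⟩
          have : j' ∈ assigned μt s := by
            rw [← hLam_high s (by omega)]; exact mem_assigned.2 hj'
          exact mem_assigned.1 this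
  have hLam_st : Stable E (reshP t Q) Lam := ⟨hLam_feas, hLam_IR, hLam_nb⟩
  by_cases hνi : ν i = none
  · rw [hνi]; exact (hrural i).2 hνi
  · rcases hx : ν i with _ | s''
    · exact absurd hx hνi
    · obtain ⟨his, hsk''⟩ := (hν_some i s'').1 hx
      have hli : ¬ DA E P' i = none := fun h => hνi ((hrural i).1 h)
      rcases hy : DA E P' i with _ | s'
      · exact absurd hy hli
      · obtain ⟨hipart, hs'k, hs'acc⟩ := hLtier i s' hy
        have h1 := hLnu i
        rw [hy, hx, hP'p i hipart, trunc_good (A := fun s => t s = k + 1) hs'k,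
          trunc_good (A := fun s => t s = k + 1) (show t s'' = k + 1 by omega)] at h1
        have h2 := hspec.2 Lam hLam_st i
        have hLami : Lam i = some s' := by rw [hLam_ps i hipart hli, hy]
        rw [his, hLami] at h2
        simp only [reshP_app] at h2
        have hsacc'' := hacc i s'' his
        have h4 : ¬ ((Q i).rank (some s') < (Q i).rank (some s'')) := by
          intro hc
          have := (resh_same_tier hs'acc hsacc'' (show t s' = t s'' by omega)).2 hc
          omega
        have h5 : (Q i).rank (some s') = (Q i).rank (some s'') := by omega
        have h6 : s' = s'' := Option.some.inj ((Q i).inj h5)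
        rw [h6]

theorem TDAaux_cut (E : Prio I S) (t : S → ℕ) (Q : I → Pref S) (hts : ∀ s : S, 1 ≤ t s) :
    ∀ k i, TDAaux E t Q k i = cutLE t k (DA E (reshP t Q) i) := by
  intro k
  induction k with
  | zero =>
      intro i
      rcases hx : DA E (reshP t Q) i with _ | s
      · simp [TDAaux, cutLE]
      · have hns : ¬ t s ≤ 0 := by have := hts s; omega
        simp [TDAaux, cutLE, hns]
  | succ k ih =>
      intro i
      by_cases hc : TDAaux E t Q k i = none
      · have hstep : TDAaux E t Q (k + 1) i
            = DA E (fun j => if TDAaux E t Q k j = none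
              then trunc (fun s => t s = k + 1) (Q j)
              else trunc (fun _ => False) (Q j)) i := by
          simp only [TDAaux, hc]
        rw [hstep, round_lemma E t Q k ih i]
        have hkc : cutLE t k (DA E (reshP t Q) i) = none := by rw [← ih i]; exact hc
        rcases hx : DA E (reshP t Q) i with _ | s
        · simp [cutEQ, cutLE]
        · rw [hx] at hkc
          have hns : ¬ t s ≤ k := by
            by_contra h
            simp [cutLE, h] at hkc
          by_cases he : t s = k + 1
          · simp [cutEQ, cutLE, he]
          · have hn2 : ¬ t s ≤ k + 1 := by omega
            simp [cutEQ, cutLE, he, hn2]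
      · obtain ⟨s, hs⟩ := Option.ne_none_iff_exists'.1 hc
        have hstep : TDAaux E t Q (k + 1) i = some s := by simp only [TDAaux, hs]
        rw [hstep]
        have h2 : cutLE t k (DA E (reshP t Q) i) = some s := by rw [← ih i]; exact hs
        obtain ⟨hDA, hsk⟩ := cutLE_eq_some.1 h2
        rw [hDA]
        simp [cutLE, show t s ≤ k + 1 by omega]

theorem TDA_eq_resh (E : Prio I S) (t : S → ℕ) (Q : I → Pref S) (hts : ∀ s : S, 1 ≤ t s) :
    TDA E t Q = DA E (reshP t Q) := by
  funext i
  rw [TDA, TDAaux_cut E t Q hts (Finset.univ.sup t) i]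
  rcases hx : DA E (reshP t Q) i with _ | s
  · simp [cutLE]
  · simp [cutLE, Finset.le_sup (Finset.mem_univ s)]

end TDAeq

end GS

/-- If `Q` is a TDA Nash equilibrium, then under DA with the reshuffled
profile, each student gets the same assignment as if he reported truthfully against the
others' reshuffled reports. -/
theorem DA_reshuffled_eq_truthful_deviation
    (E : Prio I S) (t : S → ℕ) (T : ℕ) (ht : IsTierStructure t T)
    (R Q : I → Pref S) (hQ : NashEq R (TDA E t) Q) (i : I) :
    DA E (fun j => reshuffle t (Q j)) i
      = DA E (Function.update (fun j => reshuffle t (Q j)) i (R i)) i := by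
  classical
  have hts : ∀ s : S, 1 ≤ t s := fun s => (ht.1 s).1
  show DA E (reshP t Q) i = DA E (Function.update (reshP t Q) i (R i)) i
  have hTDA : TDA E t Q = DA E (reshP t Q) := TDA_eq_resh E t Q hts
  -- TDA deviations correspond to reshuffled DA deviations
  have key : ∀ p : Pref S, TDA E t (Function.update Q i p)
      = DA E (Function.update (reshP t Q) i (reshuffle t p)) := by
    intro p
    rw [TDA_eq_resh E t _ hts]
    have hprof : reshP t (Function.update Q i p)
        = Function.update (reshP t Q) i (reshuffle t p) := by
      funext j
      by_cases hj : j = i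
      · subst hj
        rw [reshP_app, Function.update_self, Function.update_self]
      · rw [reshP_app, Function.update_of_ne hj, Function.update_of_ne hj, reshP_app]
    rw [hprof]
  -- strategy-proofness direction
  have hsp := DA_sp E (reshP t Q) i (R i)
  -- Nash-equilibrium direction
  have hother : (R i).rank (DA E (reshP t Q) i)
      ≤ (R i).rank (DA E (Function.update (reshP t Q) i (R i)) i) := by
    rcases hx : DA E (Function.update (reshP t Q) i (R i)) i with _ | s
    · -- deviate to reporting nothing acceptable
      set p := trunc (fun _ => False) (Q i) with hpdef
      have hpun : ∀ s' : S, ¬ p.rank (some s') < p.rank none := by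
        intro s'
        rw [hpdef, trunc_bad (A := fun _ => False) (fun h => h), trunc_none]
        have := rank_lt_bnd (Q i) none
        omega
      have hrpun : ∀ s' : S, (reshuffle t p).rank none < (reshuffle t p).rank (some s') := by
        intro s'
        rw [resh_unacc (hpun s'), resh_none]
        omega
      have hDAnone : DA E (Function.update (reshP t Q) i (reshuffle t p)) i = none := by
        apply DA_none
        intro s'
        rw [Function.update_self]
        exact hrpun s'
      have hNE := hQ i p
      rw [hTDA, key p, hDAnone] at hNE
      exact hNE
    · -- deviate to reporting only `s` acceptable
      have hponly_acc : (reshuffle t (pOnly s)).rank (some s)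
          < (reshuffle t (pOnly s)).rank none := resh_lt_none (pOnly_acc s)
      have hponly_un : ∀ s', s' ≠ s →
          (reshuffle t (pOnly s)).rank none < (reshuffle t (pOnly s)).rank (some s') := by
        intro s' hs'
        have h1 : ¬ (pOnly s).rank (some s') < (pOnly s).rank none := by
          have := pOnly_unacc hs'; omega
        rw [resh_unacc h1, resh_none]
        omega
      have h48 := truncation_lemma E (Function.update (reshP t Q) i (R i)) i s
        (reshuffle t (pOnly s)) hponly_acc hponly_un hx
      rw [Function.update_idem] at h48
      have hNE := hQ i (pOnly s)
      rw [hTDA, key (pOnly s), h48] at hNE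
      exact hNE
  exact (R i).inj (le_antisymm hother hsp)

end SchoolChoice
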